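/- Let C ∈ ℂ^{2×2} be diagonalizable and positive stable with eigenvalues λ₁ ≠ λ₂, eigenvector angle cosine α = |⟨v₁/‖v₁‖, v₂/‖v₂‖⟩| ∈ [0,1), γ := Re(λ₂−λ₁), δ := Im(λ₂−λ₁). Then every solution of f' = −Cf satisfies h₋(t)‖f(0)‖₂² ≤ ‖f(t)‖₂² ≤ h₊(t)‖f(0)‖₂² for all t ≥ 0, where h_±(t) = e^{−2Re λ₁ t} m_±(t) and m_±(t) = ±e^{−γt}( √( (cosh(γt) − α² cos(δt))²/(1−α²)² − 1 ) ± (cosh(γt) − α² cos(δt))/(1−α²) ). -/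

import Mathlib

open Matrix Complex Finset

private lemma quad_bound {a d c x y : ℝ} (ha : 0 ≤ a) (hd : 0 ≤ d) (hx : 0 ≤ x) (hy : 0 ≤ y)
    (hc : 0 ≤ c) (hdet : c ^ 2 ≤ a * d) : 2 * (c * (x * y)) ≤ a * x ^ 2 + d * y ^ 2 := by
  have hsa : Real.sqrt a ^ 2 = a := Real.sq_sqrt ha
  have hsd : Real.sqrt d ^ 2 = d := Real.sq_sqrt hd
  have hcs : c ≤ Real.sqrt a * Real.sqrt d := by
    rw [← Real.sqrt_mul ha, ← Real.sqrt_sq hc]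
    exact Real.sqrt_le_sqrt hdet
  nlinarith [sq_nonneg (Real.sqrt a * x - Real.sqrt d * y), mul_nonneg hx hy]

private lemma norm_expand (v1 v2 : Fin 2 → ℂ)
    (n1 : ∑ i, ‖v1 i‖ ^ 2 = (1:ℝ)) (n2 : ∑ i, ‖v2 i‖ ^ 2 = (1:ℝ)) (c1 c2 : ℂ) :
    ∑ i, ‖c1 * v1 i + c2 * v2 i‖ ^ 2
      = ‖c1‖ ^ 2 + ‖c2‖ ^ 2 + 2 * ((starRingEnd ℂ) c1 * c2 * (star v1 ⬝ᵥ v2)).re := by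
  simp only [← Complex.normSq_eq_norm_sq, Complex.normSq_apply,
    dotProduct, Fin.sum_univ_two, Pi.star_apply, RCLike.star_def,
    Complex.mul_re, Complex.mul_im, Complex.add_re, Complex.add_im,
    Complex.conj_re, Complex.conj_im] at n1 n2 ⊢
  linear_combination (c1.re ^ 2 + c1.im ^ 2) * n1 + (c2.re ^ 2 + c2.im ^ 2) * n2

private lemma det_identity (αs β p r eγ em co E : ℝ) (h1 : eγ * em = 1)
    (h6 : eγ + em = 2 * (p * β + αs * co)) (h4 : r ^ 2 = p ^ 2 - 1) (h5 : β = 1 - αs) :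
    αs * (E ^ 2 - 2 * E * (E * (p + r)) * co + (E * (p + r)) ^ 2)
      = (E * (p + r) - E * eγ) * (E * (p + r) - E * em) := by
  linear_combination (-(E ^ 2)) * h1 + (E ^ 2 * (p + r)) * h6
    + (E ^ 2 * (1 + (p + r) ^ 2)) * h5 + (-(E ^ 2 * β)) * h4

set_option maxHeartbeats 2000000 in
theorem stmt14 (C : Matrix (Fin 2) (Fin 2) ℂ) (lam1 lam2 : ℂ) (v1 v2 : Fin 2 → ℂ) (α : ℝ)
    (hv1 : v1 ≠ 0) (hv2 : v2 ≠ 0)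
    (he1 : C.mulVec v1 = lam1 • v1) (he2 : C.mulVec v2 = lam2 • v2)
    (hne : lam1 ≠ lam2) (hst1 : 0 < lam1.re) (hst2 : 0 < lam2.re)
    (hn1 : Real.sqrt (∑ i, ‖v1 i‖ ^ 2) = 1) (hn2 : Real.sqrt (∑ i, ‖v2 i‖ ^ 2) = 1)
    (hα : α = ‖star v1 ⬝ᵥ v2‖) (hα1 : α < 1)
    (f : ℝ → Fin 2 → ℂ) (hf : ∀ t : ℝ, HasDerivAt f (-(C.mulVec (f t))) t) :
    ∀ t : ℝ, 0 ≤ t →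
      let γ : ℝ := (lam2 - lam1).re
      let δ : ℝ := (lam2 - lam1).im
      let q : ℝ := Real.cosh (γ * t) - α ^ 2 * Real.cos (δ * t)
      let mp : ℝ := Real.exp (-γ * t) *
        (Real.sqrt (q ^ 2 / (1 - α ^ 2) ^ 2 - 1) + q / (1 - α ^ 2))
      let mm : ℝ := -(Real.exp (-γ * t) *
        (Real.sqrt (q ^ 2 / (1 - α ^ 2) ^ 2 - 1) - q / (1 - α ^ 2)))
      Real.exp (-(2 * lam1.re) * t) * mm * ∑ i, ‖f 0 i‖ ^ 2 ≤ ∑ i, ‖f t i‖ ^ 2 ∧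
      ∑ i, ‖f t i‖ ^ 2 ≤ Real.exp (-(2 * lam1.re) * t) * mp * ∑ i, ‖f 0 i‖ ^ 2 := by
  have n1 : ∑ i, ‖v1 i‖ ^ 2 = (1:ℝ) := Real.sqrt_eq_one.mp hn1
  have n2 : ∑ i, ‖v2 i‖ ^ 2 = (1:ℝ) := Real.sqrt_eq_one.mp hn2
  -- decompose f 0 in the eigenbasis
  have hli : LinearIndependent ℂ ![v1, v2] := by
    apply Module.End.eigenvectors_linearIndependent' (Matrix.mulVecLin C) ![lam1, lam2]
    · intro i j hij
      fin_cases i <;> fin_cases j <;> simp_all <;> first | rfl | exact hne hij | exact hne hij.symm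
    · intro i
      fin_cases i
      · exact ⟨by rw [Module.End.mem_eigenspace_iff]; simpa using he1, hv1⟩
      · exact ⟨by rw [Module.End.mem_eigenspace_iff]; simpa using he2, hv2⟩
  have hcard : Fintype.card (Fin 2) = Module.finrank ℂ (Fin 2 → ℂ) := by simp
  obtain ⟨a, b, hab⟩ : ∃ a b : ℂ, f 0 = a • v1 + b • v2 := by
    set B := basisOfLinearIndependentOfCardEqFinrank hli hcard with hB
    refine ⟨B.repr (f 0) 0, B.repr (f 0) 1, ?_⟩
    have h := B.sum_repr (f 0)
    rw [Fin.sum_univ_two] at h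
    have h0 : B 0 = v1 := by rw [hB, coe_basisOfLinearIndependentOfCardEqFinrank]; rfl
    have h1 : B 1 = v2 := by rw [hB, coe_basisOfLinearIndependentOfCardEqFinrank]; rfl
    rw [h0, h1] at h
    exact h.symm
  set g : ℝ → Fin 2 → ℂ := fun s =>
    (a * Complex.exp (-(lam1 * s))) • v1 + (b * Complex.exp (-(lam2 * s))) • v2 with hg
  have hderiv_coef : ∀ (lam c : ℂ) (s : ℝ),
      HasDerivAt (fun τ : ℝ => c * Complex.exp (-(lam * τ)))
        (-lam * (c * Complex.exp (-(lam * s)))) s := by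
    intro lam c s
    have h0 : HasDerivAt (fun τ : ℝ => (τ : ℂ)) 1 s := by
      simpa using (hasDerivAt_id s).ofReal_comp
    have h1 := (((h0.const_mul lam).neg).cexp).const_mul c
    exact h1.congr_deriv (by simp only [Pi.neg_apply]; ring)
  have hgd : ∀ s : ℝ, HasDerivAt g (-(C.mulVec (g s))) s := by
    intro s
    have h1 := (hderiv_coef lam1 a s).smul_const v1
    have h2 := (hderiv_coef lam2 b s).smul_const v2
    have h3 := h1.add h2
    convert h3 using 1
    show -(C.mulVec (g s)) = _
    rw [hg]
    simp only [Matrix.mulVec_add, Matrix.mulVec_smul, he1, he2]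
    module
    all_goals rfl
  have key : ∀ t : ℝ, 0 ≤ t → f t = g t := by
    intro t ht
    set L := LinearMap.toContinuousLinearMap ((-C).mulVecLin) with hL
    have hLx : ∀ x : Fin 2 → ℂ, L x = -(C.mulVec x) := by
      intro x
      rw [hL]
      simp [Matrix.neg_mulVec]
    have := ODE_solution_unique (v := fun _ x => L x) (K := ‖L‖₊) (f := f) (g := g)
      (a := 0) (b := t) (fun _ => L.lipschitz)
      (fun s _ => (hf s).continuousAt.continuousWithinAt)
      (fun s _ => by
        show HasDerivWithinAt f (L (f s)) (Set.Ici s) s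
        rw [hLx]; exact (hf s).hasDerivWithinAt)
      (fun s _ => (hgd s).continuousAt.continuousWithinAt)
      (fun s _ => by
        show HasDerivWithinAt g (L (g s)) (Set.Ici s) s
        rw [hLx]; exact (hgd s).hasDerivWithinAt)
      (by rw [hab, hg]; simp)
    exact this ⟨ht, le_refl t⟩
  intro t ht γ δ q mp mm
  set sdot : ℂ := star v1 ⬝ᵥ v2 with hsdot
  set x := ‖a‖ with hx
  set y := ‖b‖ with hy
  set w : ℂ := (starRingEnd ℂ) a * b * sdot with hw
  set r1 := lam1.re with hr1d
  set r2 := lam2.re with hr2d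
  have hγ : γ = r2 - r1 := by show (lam2 - lam1).re = r2 - r1; rw [Complex.sub_re]
  have hδ : δ = lam2.im - lam1.im := by show (lam2 - lam1).im = _; rw [Complex.sub_im]
  set β : ℝ := 1 - α ^ 2 with hβdef
  have hα0 : 0 ≤ α := hα ▸ norm_nonneg _
  have hβ : 0 < β := by rw [hβdef]; nlinarith
  set ch := Real.cosh (γ * t) with hch
  set co := Real.cos (δ * t) with hco
  set si := Real.sin (δ * t) with hsi
  have hq : q = ch - α ^ 2 * co := rfl
  set p := q / β with hpdef
  have hqβ : β ≤ q := by
    rw [hq, hβdef]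
    have h1 := Real.one_le_cosh (γ * t)
    have h2 := Real.cos_le_one (δ * t)
    nlinarith [sq_nonneg α]
  have hp1 : 1 ≤ p := by rw [hpdef, le_div_iff₀ hβ]; linarith
  have hqp : q = p * β := by rw [hpdef]; field_simp
  have hpch : ch ≤ p := by
    rw [hpdef, le_div_iff₀ hβ, hq, hβdef]
    have h2 := Real.cos_le_one (δ * t)
    have h3 : co ≤ ch := le_trans (Real.cos_le_one _) (Real.one_le_cosh _)
    nlinarith [sq_nonneg α]
  set r := Real.sqrt (p ^ 2 - 1) with hrdef
  have hr0 : 0 ≤ r := Real.sqrt_nonneg _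
  have hr2 : r ^ 2 = p ^ 2 - 1 := Real.sq_sqrt (by nlinarith)
  have hrsinh : |Real.sinh (γ * t)| ≤ r := by
    rw [hrdef, ← Real.sqrt_sq_eq_abs]
    apply Real.sqrt_le_sqrt
    have h1 := Real.cosh_sq (γ * t)
    have h2 := Real.one_le_cosh (γ * t)
    nlinarith
  set eγ := Real.exp (γ * t) with heγ
  set em := Real.exp (-(γ * t)) with hem
  have heme : eγ * em = 1 := by rw [heγ, hem, ← Real.exp_add]; simp
  have hche : ch = (eγ + em) / 2 := Real.cosh_eq (γ * t)
  have hsinhe : Real.sinh (γ * t) = (eγ - em) / 2 := Real.sinh_eq (γ * t)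
  have hprγ : eγ ≤ p + r := by
    have h1 : eγ = ch + Real.sinh (γ * t) := by rw [hche, hsinhe]; ring
    have h2 := le_abs_self (Real.sinh (γ * t))
    linarith
  have hprm : em ≤ p + r := by
    have h1 : em = ch - Real.sinh (γ * t) := by rw [hche, hsinhe]; ring
    have h2 := neg_abs_le (Real.sinh (γ * t))
    linarith
  have hempos : 0 < em := Real.exp_pos _
  have heγpos : 0 < eγ := Real.exp_pos _
  have hpr_pos : 0 < p + r := by linarith
  have hpr1 : (p - r) * (p + r) = 1 := by linear_combination -hr2
  have hprpos' : 0 < p - r := by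
    have h1 : 0 < (p - r) * (p + r) := by rw [hpr1]; norm_num
    rcases mul_pos_iff.mp h1 with ⟨h, _⟩ | ⟨_, h⟩
    · exact h
    · linarith
  have hprl1 : p - r ≤ eγ := by
    have h1 : (p - r) * em ≤ (p - r) * (p + r) := mul_le_mul_of_nonneg_left hprm hprpos'.le
    rw [hpr1, ← heme] at h1
    exact le_of_mul_le_mul_right h1 hempos
  have hprl2 : p - r ≤ em := by
    have h1 : (p - r) * eγ ≤ (p - r) * (p + r) := mul_le_mul_of_nonneg_left hprγ hprpos'.le
    rw [hpr1, ← heme] at h1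
    rw [mul_comm eγ em] at h1
    exact le_of_mul_le_mul_right h1 heγpos
  set E := Real.exp (-((r1 + r2) * t)) with hE
  have hEpos : 0 < E := Real.exp_pos _
  set u := Real.exp (-(2 * r1) * t) with hu
  set vv := Real.exp (-(2 * r2) * t) with hvv
  have huE : u = E * eγ := by
    rw [hu, hE, heγ, ← Real.exp_add]; congr 1; rw [hγ]; ring
  have hvE : vv = E * em := by
    rw [hvv, hE, hem, ← Real.exp_add]; congr 1; rw [hγ]; ring
  -- express mp, mm
  have hq2 : q ^ 2 / (1 - α ^ 2) ^ 2 - 1 = p ^ 2 - 1 := by rw [hpdef, div_pow, hβdef]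
  have hmp : mp = em * (r + p) := by
    show Real.exp (-γ * t) * (Real.sqrt (q ^ 2 / (1 - α ^ 2) ^ 2 - 1) + q / (1 - α ^ 2)) = _
    rw [neg_mul, hq2, ← hrdef, ← hem]
  have hmm : mm = em * (p - r) := by
    show -(Real.exp (-γ * t) * (Real.sqrt (q ^ 2 / (1 - α ^ 2) ^ 2 - 1) - q / (1 - α ^ 2))) = _
    rw [neg_mul, hq2, ← hrdef, ← hem, ← hβdef, ← hpdef]
    ring
  -- the exponential factor Ec
  set Ec : ℂ := Complex.exp (-(((starRingEnd ℂ) lam1 + lam2) * (t : ℂ))) with hEc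
  have hEcre : Ec.re = E * co := by
    rw [hEc, Complex.exp_re]
    have h1 : (-(((starRingEnd ℂ) lam1 + lam2) * (t : ℂ))).re = -((r1 + r2) * t) := by
      rw [hr1d, hr2d]
      simp only [Complex.neg_re, Complex.mul_re, Complex.add_re, Complex.ofReal_re,
        Complex.ofReal_im, Complex.conj_re, Complex.mul_im, Complex.add_im, Complex.conj_im]
      ring
    have h2 : (-(((starRingEnd ℂ) lam1 + lam2) * (t : ℂ))).im = -(δ * t) := by
      rw [hδ]
      simp only [Complex.neg_im, Complex.mul_re, Complex.add_re, Complex.ofReal_re,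
        Complex.ofReal_im, Complex.conj_re, Complex.mul_im, Complex.add_im, Complex.conj_im]
      ring
    rw [h1, h2, ← hE, Real.cos_neg, ← hco]
  have hEcim : Ec.im = -(E * si) := by
    rw [hEc, Complex.exp_im]
    have h1 : (-(((starRingEnd ℂ) lam1 + lam2) * (t : ℂ))).re = -((r1 + r2) * t) := by
      rw [hr1d, hr2d]
      simp only [Complex.neg_re, Complex.mul_re, Complex.add_re, Complex.ofReal_re,
        Complex.ofReal_im, Complex.conj_re, Complex.mul_im, Complex.add_im, Complex.conj_im]
      ring
    have h2 : (-(((starRingEnd ℂ) lam1 + lam2) * (t : ℂ))).im = -(δ * t) := by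
      rw [hδ]
      simp only [Complex.neg_im, Complex.mul_re, Complex.add_re, Complex.ofReal_re,
        Complex.ofReal_im, Complex.conj_re, Complex.mul_im, Complex.add_im, Complex.conj_im]
      ring
    rw [h1, h2, ← hE, Real.sin_neg, ← hsi]
    ring
  have hsc : si ^ 2 + co ^ 2 = 1 := Real.sin_sq_add_cos_sq (δ * t)
  have hEcm : ∀ m : ℝ, ‖Ec - (m : ℂ)‖ ^ 2 = E ^ 2 - 2 * E * m * co + m ^ 2 := by
    intro m
    rw [Complex.sq_norm, Complex.normSq_apply, Complex.sub_re,
      Complex.sub_im, hEcre, hEcim, Complex.ofReal_re, Complex.ofReal_im]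
    linear_combination (E ^ 2) * hsc
  -- norm of w
  have hwnorm : ‖w‖ = α * (x * y) := by
    rw [hw, norm_mul, norm_mul, RCLike.norm_conj, ← hα, ← hx, ← hy]
    ring
  -- sum formulas
  have hft : f t = g t := key t ht
  have hf0g : ∑ i, ‖f 0 i‖ ^ 2 = x ^ 2 + y ^ 2 + 2 * w.re := by
    rw [hab]
    have : ∀ i, (a • v1 + b • v2) i = a * v1 i + b * v2 i := by
      intro i; simp [Pi.add_apply, Pi.smul_apply, smul_eq_mul]
    rw [Finset.sum_congr rfl fun i _ => by rw [this i]]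
    rw [norm_expand v1 v2 n1 n2 a b, ← hsdot, ← hw, ← hx, ← hy]
  have hc1 : ‖a * Complex.exp (-(lam1 * (t : ℂ)))‖ ^ 2 = x ^ 2 * u := by
    rw [norm_mul, mul_pow, ← hx, Complex.norm_exp]
    congr 1
    have h1 : (-(lam1 * (t : ℂ))).re = -(r1 * t) := by simp [Complex.mul_re, hr1d]
    rw [h1, hu, sq, ← Real.exp_add]
    congr 1
    ring
  have hc2 : ‖b * Complex.exp (-(lam2 * (t : ℂ)))‖ ^ 2 = y ^ 2 * vv := by
    rw [norm_mul, mul_pow, ← hy, Complex.norm_exp]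
    congr 1
    have h1 : (-(lam2 * (t : ℂ))).re = -(r2 * t) := by simp [Complex.mul_re, hr2d]
    rw [h1, hvv, sq, ← Real.exp_add]
    congr 1
    ring
  have hcross : (starRingEnd ℂ) (a * Complex.exp (-(lam1 * (t : ℂ)))) *
      (b * Complex.exp (-(lam2 * (t : ℂ)))) * sdot = w * Ec := by
    rw [_root_.map_mul, ← _root_.Complex.exp_conj]
    have h1 : (starRingEnd ℂ) (-(lam1 * (t : ℂ))) = -((starRingEnd ℂ) lam1 * (t : ℂ)) := by
      rw [_root_.map_neg, _root_.map_mul, Complex.conj_ofReal]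
    rw [h1, hw, hEc]
    have h2 : Complex.exp (-((starRingEnd ℂ) lam1 * (t : ℂ))) *
        Complex.exp (-(lam2 * (t : ℂ))) =
        Complex.exp (-(((starRingEnd ℂ) lam1 + lam2) * (t : ℂ))) := by
      rw [← Complex.exp_add]; congr 1; ring
    calc (starRingEnd ℂ) a * Complex.exp (-((starRingEnd ℂ) lam1 * (t : ℂ))) *
          (b * Complex.exp (-(lam2 * (t : ℂ)))) * sdot
        = (starRingEnd ℂ) a * b * sdot * (Complex.exp (-((starRingEnd ℂ) lam1 * (t : ℂ))) *
            Complex.exp (-(lam2 * (t : ℂ)))) := by ring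
      _ = _ := by rw [h2]
  have hSt : ∑ i, ‖f t i‖ ^ 2 = x ^ 2 * u + y ^ 2 * vv + 2 * (w * Ec).re := by
    rw [hft]
    have : ∀ i, g t i = (a * Complex.exp (-(lam1 * (t : ℂ)))) * v1 i +
        (b * Complex.exp (-(lam2 * (t : ℂ)))) * v2 i := by
      intro i; rw [hg]; simp [Pi.add_apply, Pi.smul_apply, smul_eq_mul]
    rw [Finset.sum_congr rfl fun i _ => by rw [this i]]
    rw [norm_expand v1 v2 n1 n2, ← hsdot, hcross, hc1, hc2]
  -- re bounds for cross terms
  have hre : ∀ z : ℂ, (w * z).re ≤ α * (x * y) * ‖z‖ ∧ -(α * (x * y) * ‖z‖) ≤ (w * z).re := by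
    intro z
    have h1 : |(w * z).re| ≤ ‖w * z‖ := Complex.abs_re_le_norm _
    rw [norm_mul, hwnorm] at h1
    constructor
    · linarith [le_abs_self (w * z).re]
    · linarith [neg_abs_le (w * z).re]
  have hxy0 : 0 ≤ x := norm_nonneg _
  have hy0 : 0 ≤ y := norm_nonneg _
  have hch2 : ch = p * β + α ^ 2 * co := by
    have h1 := hq
    rw [hqp] at h1
    linarith
  have h6 : eγ + em = 2 * (p * β + α ^ 2 * co) := by
    rw [← hch2]
    linarith [hche]
  have hresub : ∀ m : ℝ, (w * (Ec - (m : ℂ))).re = (w * Ec).re - m * w.re := by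
    intro m
    rw [mul_sub, Complex.sub_re]
    congr 1
    rw [mul_comm, Complex.re_ofReal_mul]
  constructor
  · -- lower bound with μm = E * (p - r)
    have hdet : (α * ‖Ec - ((E * (p - r) : ℝ) : ℂ)‖) ^ 2 = (u - E * (p - r)) * (vv - E * (p - r)) := by
      rw [mul_pow, hEcm (E * (p - r)), huE, hvE]
      have hid := det_identity (α ^ 2) β p (-r) eγ em co E heme h6 (by rw [← hr2]; ring) hβdef
      linear_combination hid
    have hd1 : 0 ≤ u - E * (p - r) := by
      rw [huE]
      have := mul_le_mul_of_nonneg_left hprl1 hEpos.le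
      linarith
    have hd2 : 0 ≤ vv - E * (p - r) := by
      rw [hvE]
      have := mul_le_mul_of_nonneg_left hprl2 hEpos.le
      linarith
    have hquad := quad_bound hd1 hd2 hxy0 hy0
      (mul_nonneg hα0 (norm_nonneg _)) (le_of_eq hdet)
    have hrebound := (hre (Ec - ((E * (p - r) : ℝ) : ℂ))).2
    rw [hresub] at hrebound
    have hcoef : Real.exp (-(2 * r1) * t) * mm = E * (p - r) := by
      rw [hmm, ← hu, huE]
      linear_combination (E * (p - r)) * heme
    rw [hcoef, hSt, hf0g]
    linarith [hquad, hrebound]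
  · -- upper bound with μp = E * (p + r)
    have hdet : (α * ‖Ec - ((E * (p + r) : ℝ) : ℂ)‖) ^ 2 = (E * (p + r) - u) * (E * (p + r) - vv) := by
      rw [mul_pow, hEcm (E * (p + r)), huE, hvE]
      have hid := det_identity (α ^ 2) β p r eγ em co E heme h6 hr2 hβdef
      linear_combination hid
    have hd1 : 0 ≤ E * (p + r) - u := by
      rw [huE]
      have := mul_le_mul_of_nonneg_left hprγ hEpos.le
      linarith
    have hd2 : 0 ≤ E * (p + r) - vv := by
      rw [hvE]
      have := mul_le_mul_of_nonneg_left hprm hEpos.le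
      linarith
    have hquad := quad_bound hd1 hd2 hxy0 hy0
      (mul_nonneg hα0 (norm_nonneg _)) (le_of_eq hdet)
    have hrebound := (hre (Ec - ((E * (p + r) : ℝ) : ℂ))).1
    rw [hresub] at hrebound
    have hcoef : Real.exp (-(2 * r1) * t) * mp = E * (p + r) := by
      rw [hmp, ← hu, huE]
      linear_combination (E * (r + p)) * heme
    rw [hcoef, hSt, hf0g]
    linarith [hquad, hrebound]
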